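/- Let t ∈ [0,1] and let (θ_k), (α_k), (γ_k) be arbitrary real sequences. Then there exists a diagonal unitary operator V on ℓ²(ℤ), of the form Vφ_k = e^{iζ_k}φ_k for a real sequence (ζ_k)_{k∈ℤ}, such that V⁻¹ M((θ_k),(α_k),(γ_k)) V = M((θ_k),(α_k),(0)). In particular M((θ_k),(α_k),(γ_k)) is unitarily equivalent to M((θ_k),(α_k),(0)), i.e. to the same operator with all phases γ_k replaced by 0. -/

import Mathlib

open Complex

noncomputable section

/-- The Hilbert space `ℓ²(ℤ)`. -/
abbrev H : Type := lp (fun _ : ℤ => ℂ) 2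

/-- The canonical orthonormal basis vector `φ_k` of `ℓ²(ℤ)`. -/
def phi (k : ℤ) : H := lp.single 2 k 1

/-- `IsM t r θ α γ U` expresses that the bounded operator `U` on `ℓ²(ℤ)` acts on the
canonical basis as the monodromy operator `M((θ_k), (α_k), (γ_k))` with transition
coefficient `t` and reflection coefficient `r`. -/
def IsM (t r : ℝ) (θ α γ : ℤ → ℝ) (U : H →L[ℂ] H) : Prop :=
  ∀ k : ℤ,
    U (phi (2 * k)) =
      (Complex.I * r * t * Complex.exp (-Complex.I * ((θ (2 * k) + θ (2 * k - 1) : ℝ) : ℂ))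
        * Complex.exp (-Complex.I * ((α (2 * k) - γ (2 * k - 1) : ℝ) : ℂ))) • phi (2 * k - 1)
      + ((r : ℂ) ^ 2 * Complex.exp (-Complex.I * ((θ (2 * k) + θ (2 * k - 1) : ℝ) : ℂ))
        * Complex.exp (-Complex.I * ((α (2 * k) - α (2 * k - 1) : ℝ) : ℂ))) • phi (2 * k)
      + (Complex.I * r * t * Complex.exp (-Complex.I * ((θ (2 * k) + θ (2 * k + 1) : ℝ) : ℂ))
        * Complex.exp (-Complex.I * ((γ (2 * k) + α (2 * k + 1) : ℝ) : ℂ))) • phi (2 * k + 1)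
      - ((t : ℂ) ^ 2 * Complex.exp (-Complex.I * ((θ (2 * k) + θ (2 * k + 1) : ℝ) : ℂ))
        * Complex.exp (-Complex.I * ((γ (2 * k) + γ (2 * k + 1) : ℝ) : ℂ))) • phi (2 * k + 2)
    ∧
    U (phi (2 * k + 1)) =
      (-((t : ℂ) ^ 2) * Complex.exp (-Complex.I * ((θ (2 * k) + θ (2 * k - 1) : ℝ) : ℂ))
        * Complex.exp (Complex.I * ((γ (2 * k) + γ (2 * k - 1) : ℝ) : ℂ))) • phi (2 * k - 1)
      + (Complex.I * t * r * Complex.exp (-Complex.I * ((θ (2 * k) + θ (2 * k - 1) : ℝ) : ℂ))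
        * Complex.exp (Complex.I * ((γ (2 * k) + α (2 * k - 1) : ℝ) : ℂ))) • phi (2 * k)
      + ((r : ℂ) ^ 2 * Complex.exp (-Complex.I * ((θ (2 * k) + θ (2 * k + 1) : ℝ) : ℂ))
        * Complex.exp (Complex.I * ((α (2 * k) - α (2 * k + 1) : ℝ) : ℂ))) • phi (2 * k + 1)
      + (Complex.I * r * t * Complex.exp (-Complex.I * ((θ (2 * k) + θ (2 * k + 1) : ℝ) : ℂ))
        * Complex.exp (Complex.I * ((α (2 * k) - γ (2 * k + 1) : ℝ) : ℂ))) • phi (2 * k + 2)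

end

noncomputable section

def zeta (γ : ℤ → ℝ) : ℤ → ℝ
  | Int.ofNat n => -(∑ j ∈ Finset.range n, γ j)
  | Int.negSucc n => ∑ j ∈ Finset.range (n + 1), γ (Int.negSucc j)

lemma zeta_succ (γ : ℤ → ℝ) (n : ℤ) : zeta γ (n + 1) = zeta γ n - γ n := by
  cases n with
  | ofNat m =>
      show zeta γ (Int.ofNat (m + 1)) = _
      simp [zeta, Finset.sum_range_succ]
      ring
  | negSucc m =>
      cases m with
      | zero => simp [zeta, show (Int.negSucc 0 + 1) = Int.ofNat 0 by rfl]
      | succ k =>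
          show zeta γ (Int.negSucc k) = _
          simp [zeta, Finset.sum_range_succ]

example (f : H) (k : ℤ) : (f : ∀ i : ℤ, ℂ) k • phi k = lp.single 2 k (f k) := by
  rw [phi, ← lp.single_smul, smul_eq_mul, mul_one]

example (f : H) : HasSum (fun k : ℤ => (f : ∀ i : ℤ, ℂ) k • phi k) f := by
  have h := lp.hasSum_single (E := fun _ : ℤ => ℂ) (p := 2) (by norm_num) f
  convert h using 2 with k
  rw [phi, ← lp.single_smul, smul_eq_mul, mul_one]

lemma hasSum_phi (f : H) : HasSum (fun k : ℤ => (f : ∀ i : ℤ, ℂ) k • phi k) f := by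
  have h := lp.hasSum_single (E := fun _ : ℤ => ℂ) (p := 2) (by norm_num) f
  convert h using 2 with k
  rw [phi, ← lp.single_smul, smul_eq_mul, mul_one]

lemma inner_phi_phi (i j : ℤ) : (inner ℂ (phi i) (phi j) : ℂ) = if i = j then 1 else 0 := by
  rw [phi, phi, lp.inner_single_left]
  simp only [RCLike.inner_apply, map_one, one_mul]
  by_cases h : i = j
  · subst h; simp [lp.single_apply_self]
  · rw [lp.single_apply_ne 2 j 1 (fun hij => h hij), if_neg h, zero_mul]

lemma orthonormal_smul_phi (u : ℤ → ℂ) (hu : ∀ k, ‖u k‖ = 1) :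
    Orthonormal ℂ (fun k => u k • phi k) := by
  rw [orthonormal_iff_ite]
  intro i j
  rw [inner_smul_left, inner_smul_right, inner_phi_phi]
  by_cases h : i = j
  · subst h
    have : (starRingEnd ℂ) (u i) * u i = 1 := by
      rw [mul_comm, Complex.mul_conj]
      norm_cast
      rw [Complex.normSq_eq_norm_sq, hu i, one_pow]
    simp [this]
  · simp [h]

lemma top_le_span_smul_phi (u : ℤ → ℂ) (hu : ∀ k, u k ≠ 0) :
    ⊤ ≤ (Submodule.span ℂ (Set.range (fun k => u k • phi k))).topologicalClosure := by
  rintro x -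
  refine mem_closure_of_tendsto (hasSum_phi x) (Filter.Eventually.of_forall fun s => ?_)
  simp only [SetLike.mem_coe]
  refine Submodule.sum_mem _ fun i _ => ?_
  have : (x : ∀ i : ℤ, ℂ) i • phi i = ((x : ∀ i : ℤ, ℂ) i * (u i)⁻¹) • (u i • phi i) := by
    rw [smul_smul, mul_assoc, inv_mul_cancel₀ (hu i), mul_one]
  rw [this]
  exact Submodule.smul_mem _ _ (Submodule.subset_span ⟨i, rfl⟩)

lemma exp_keyC (a b c d : ℂ) (h : a + b = c + d) :
    Complex.exp a * Complex.exp b = Complex.exp c * Complex.exp d := by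
  rw [← Complex.exp_add, ← Complex.exp_add, h]

section V
variable (u : ℤ → ℂ)

lemma orthonormal_phi : Orthonormal ℂ phi := by
  have := orthonormal_smul_phi (fun _ => 1) (by simp)
  simpa using this

lemma top_le_span_phi : ⊤ ≤ (Submodule.span ℂ (Set.range phi)).topologicalClosure := by
  have := top_le_span_smul_phi (fun _ => 1) (by simp)
  simpa using this

def Bcan : HilbertBasis ℤ ℂ H := HilbertBasis.mk orthonormal_phi top_le_span_phi

lemma Bcan_coe : ⇑Bcan = phi := HilbertBasis.coe_mk _ _

def Bu (hu : ∀ k, ‖u k‖ = 1) : HilbertBasis ℤ ℂ H :=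
  HilbertBasis.mk (orthonormal_smul_phi u hu)
    (top_le_span_smul_phi u (fun k hk => by have := hu k; rw [hk] at this; simp at this))

lemma Bu_coe (hu : ∀ k, ‖u k‖ = 1) : ⇑(Bu u hu) = fun k => u k • phi k :=
  HilbertBasis.coe_mk _ _

def Vequiv (hu : ∀ k, ‖u k‖ = 1) : H ≃ₗᵢ[ℂ] H :=
  Bcan.repr.trans (Bu u hu).repr.symm

lemma Vequiv_phi (hu : ∀ k, ‖u k‖ = 1) (k : ℤ) : Vequiv u hu (phi k) = u k • phi k := by
  have h1 : Bcan.repr (phi k) = lp.single 2 k 1 := by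
    conv_lhs => rw [← Bcan_coe]
    exact Bcan.repr_self k
  rw [Vequiv, LinearIsometryEquiv.trans_apply, h1, HilbertBasis.repr_symm_single]
  rw [show (Bu u hu) k = u k • phi k from congrFun (Bu_coe u hu) k]

end V

end

/-- The phases `γ_k` can be gauged away: `M((θ_k),(α_k),(γ_k))` is conjugate, via a
diagonal unitary `V φ_k = e^{iζ_k} φ_k`, to `M((θ_k),(α_k),(0))`. -/
theorem M_gauge_equivalence (t : ℝ) (ht0 : 0 ≤ t) (ht1 : t ≤ 1)
    (θ α γ : ℤ → ℝ) (U U₀ : H →L[ℂ] H)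
    (hU : IsM t (Real.sqrt (1 - t ^ 2)) θ α γ U)
    (hU₀ : IsM t (Real.sqrt (1 - t ^ 2)) θ α (fun _ => 0) U₀) :
    ∃ (ζ : ℤ → ℝ) (V : H →L[ℂ] H),
      V ∈ unitary (H →L[ℂ] H) ∧
      (∀ k : ℤ, V (phi k) = Complex.exp (Complex.I * (ζ k : ℂ)) • phi k) ∧
      U ∘L V = V ∘L U₀ := by
  set ζ : ℤ → ℝ := zeta γ with hζdef
  have hz : ∀ n : ℤ, ζ (n + 1) = ζ n - γ n := zeta_succ γ
  set u : ℤ → ℂ := fun k => Complex.exp (Complex.I * (ζ k : ℂ)) with hudef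
  have hu : ∀ k, ‖u k‖ = 1 := by
    intro k
    rw [hudef]
    simp [Complex.norm_exp]
  set V : H →L[ℂ] H := (Vequiv u hu : H →L[ℂ] H) with hVdef
  have hV : ∀ k : ℤ, V (phi k) = u k • phi k := fun k => Vequiv_phi u hu k
  refine ⟨ζ, V, ?_, fun k => hV k, ?_⟩
  · exact ((Unitary.linearIsometryEquiv (𝕜 := ℂ) (H := H)).symm (Vequiv u hu)).2
  · have hdense : Dense ((Submodule.span ℂ (Set.range phi) : Submodule ℂ H) : Set H) := by
      rw [Submodule.dense_iff_topologicalClosure_eq_top]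
      exact le_antisymm le_top top_le_span_phi
    refine ContinuousLinearMap.ext_on hdense ?_
    rintro _ ⟨k, rfl⟩
    obtain ⟨m, hm | hm⟩ := Int.even_or_odd' k <;> subst hm <;>
      simp only [ContinuousLinearMap.comp_apply]
    · -- even case
      have h1 : ζ (2 * m) = ζ (2 * m - 1) - γ (2 * m - 1) := by
        have := hz (2 * m - 1); rw [show (2 * m - 1 + 1 : ℤ) = 2 * m by ring] at this; exact this
      have h2 : ζ (2 * m + 1) = ζ (2 * m) - γ (2 * m) := hz (2 * m)
      have h3 : ζ (2 * m + 2) = ζ (2 * m + 1) - γ (2 * m + 1) := by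
        have := hz (2 * m + 1); rw [show (2 * m + 1 + 1 : ℤ) = 2 * m + 2 by ring] at this
        exact this
      have hc1 : (ζ (2 * m) : ℂ) = (ζ (2 * m - 1) : ℂ) - (γ (2 * m - 1) : ℂ) := by
        exact_mod_cast congrArg Complex.ofReal h1
      have hc2 : (ζ (2 * m + 1) : ℂ) = (ζ (2 * m) : ℂ) - (γ (2 * m) : ℂ) := by
        exact_mod_cast congrArg Complex.ofReal h2
      have hc3 : (ζ (2 * m + 2) : ℂ) = (ζ (2 * m + 1) : ℂ) - (γ (2 * m + 1) : ℂ) := by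
        exact_mod_cast congrArg Complex.ofReal h3
      have e1 : Complex.exp (Complex.I * (ζ (2 * m) : ℂ)) *
            Complex.exp (-Complex.I * ((α (2 * m) : ℂ) - (γ (2 * m - 1) : ℂ))) =
          Complex.exp (Complex.I * (ζ (2 * m - 1) : ℂ)) *
            Complex.exp (-Complex.I * ((α (2 * m) : ℂ) - 0)) :=
        exp_keyC _ _ _ _ (by linear_combination Complex.I * hc1)
      have e3 : Complex.exp (Complex.I * (ζ (2 * m) : ℂ)) *
            Complex.exp (-Complex.I * ((γ (2 * m) : ℂ) + (α (2 * m + 1) : ℂ))) =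
          Complex.exp (Complex.I * (ζ (2 * m + 1) : ℂ)) *
            Complex.exp (-Complex.I * ((0 : ℂ) + (α (2 * m + 1) : ℂ))) :=
        exp_keyC _ _ _ _ (by linear_combination -Complex.I * hc2)
      have e4 : Complex.exp (Complex.I * (ζ (2 * m) : ℂ)) *
            Complex.exp (-Complex.I * ((γ (2 * m) : ℂ) + (γ (2 * m + 1) : ℂ))) =
          Complex.exp (Complex.I * (ζ (2 * m + 2) : ℂ)) *
            Complex.exp (-Complex.I * ((0 : ℂ) + 0)) :=
        exp_keyC _ _ _ _ (by linear_combination -Complex.I * (hc2 + hc3))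
      rw [hV (2 * m), map_smul, (hU m).1, (hU₀ m).1]
      simp only [map_add, map_sub, map_smul, hV, smul_smul, hudef]
      beta_reduce
      match_scalars
      · linear_combination (Complex.I * ((Real.sqrt (1 - t ^ 2) : ℂ)) * (t : ℂ) *
          Complex.exp (-Complex.I * ((θ (2 * m) : ℂ) + (θ (2 * m - 1) : ℂ)))) * e1
      · ring1
      · linear_combination (Complex.I * ((Real.sqrt (1 - t ^ 2) : ℂ)) * (t : ℂ) *
          Complex.exp (-Complex.I * ((θ (2 * m) : ℂ) + (θ (2 * m + 1) : ℂ)))) * e3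
      · linear_combination (-((t : ℂ) ^ 2) *
          Complex.exp (-Complex.I * ((θ (2 * m) : ℂ) + (θ (2 * m + 1) : ℂ)))) * e4
    · -- odd case
      have h1 : ζ (2 * m) = ζ (2 * m - 1) - γ (2 * m - 1) := by
        have := hz (2 * m - 1); rw [show (2 * m - 1 + 1 : ℤ) = 2 * m by ring] at this; exact this
      have h2 : ζ (2 * m + 1) = ζ (2 * m) - γ (2 * m) := hz (2 * m)
      have h3 : ζ (2 * m + 2) = ζ (2 * m + 1) - γ (2 * m + 1) := by
        have := hz (2 * m + 1); rw [show (2 * m + 1 + 1 : ℤ) = 2 * m + 2 by ring] at this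
        exact this
      have hc1 : (ζ (2 * m) : ℂ) = (ζ (2 * m - 1) : ℂ) - (γ (2 * m - 1) : ℂ) := by
        exact_mod_cast congrArg Complex.ofReal h1
      have hc2 : (ζ (2 * m + 1) : ℂ) = (ζ (2 * m) : ℂ) - (γ (2 * m) : ℂ) := by
        exact_mod_cast congrArg Complex.ofReal h2
      have hc3 : (ζ (2 * m + 2) : ℂ) = (ζ (2 * m + 1) : ℂ) - (γ (2 * m + 1) : ℂ) := by
        exact_mod_cast congrArg Complex.ofReal h3
      have o1 : Complex.exp (Complex.I * (ζ (2 * m + 1) : ℂ)) *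
            Complex.exp (Complex.I * ((γ (2 * m) : ℂ) + (γ (2 * m - 1) : ℂ))) =
          Complex.exp (Complex.I * (ζ (2 * m - 1) : ℂ)) *
            Complex.exp (Complex.I * ((0 : ℂ) + 0)) :=
        exp_keyC _ _ _ _ (by linear_combination Complex.I * (hc1 + hc2))
      have o2 : Complex.exp (Complex.I * (ζ (2 * m + 1) : ℂ)) *
            Complex.exp (Complex.I * ((γ (2 * m) : ℂ) + (α (2 * m - 1) : ℂ))) =
          Complex.exp (Complex.I * (ζ (2 * m) : ℂ)) *
            Complex.exp (Complex.I * ((0 : ℂ) + (α (2 * m - 1) : ℂ))) :=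
        exp_keyC _ _ _ _ (by linear_combination Complex.I * hc2)
      have o4 : Complex.exp (Complex.I * (ζ (2 * m + 1) : ℂ)) *
            Complex.exp (Complex.I * ((α (2 * m) : ℂ) - (γ (2 * m + 1) : ℂ))) =
          Complex.exp (Complex.I * (ζ (2 * m + 2) : ℂ)) *
            Complex.exp (Complex.I * ((α (2 * m) : ℂ) - 0)) :=
        exp_keyC _ _ _ _ (by linear_combination -Complex.I * hc3)
      rw [hV (2 * m + 1), map_smul, (hU m).2, (hU₀ m).2]
      simp only [map_add, map_sub, map_smul, hV, smul_smul, hudef]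
      beta_reduce
      match_scalars
      · linear_combination (-((t : ℂ) ^ 2) *
          Complex.exp (-Complex.I * ((θ (2 * m) : ℂ) + (θ (2 * m - 1) : ℂ)))) * o1
      · linear_combination (Complex.I * (t : ℂ) * ((Real.sqrt (1 - t ^ 2) : ℂ)) *
          Complex.exp (-Complex.I * ((θ (2 * m) : ℂ) + (θ (2 * m - 1) : ℂ)))) * o2
      · ring1
      · linear_combination (Complex.I * ((Real.sqrt (1 - t ^ 2) : ℂ)) * (t : ℂ) *
          Complex.exp (-Complex.I * ((θ (2 * m) : ℂ) + (θ (2 * m + 1) : ℂ)))) * o4
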